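/- Affine form of Farkas' Lemma (completeness direction): Let A be a real k×n matrix, b ∈ ℝᵏ, c ∈ ℝⁿ, β ∈ ℝ. Suppose the system Ax ≥ b has at least one solution. If cᵀx ≥ β holds for every x with Ax ≥ b, then there exists λ ∈ ℝᵏ with λ ≥ 0, Aᵀλ = c and λᵀb ≥ β. -/

import Mathlib

open Finset
open scoped RealInnerProductSpace

/-- The set of nonnegative combinations of a finite family of vectors. -/
def coneSet {ι E : Type*} [Fintype ι] [AddCommGroup E] [Module ℝ E] (v : ι → E) : Set E :=
  {x | ∃ c : ι → ℝ, (∀ i, 0 ≤ c i) ∧ ∑ i, c i • v i = x}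

lemma carath_aux {ι M : Type*} [Fintype ι] [AddCommGroup M] [Module ℝ M] (v : ι → M) :
    ∀ N : ℕ, ∀ c : ι → ℝ, (∀ i, 0 ≤ c i) →
      (Finset.univ.filter fun i => c i ≠ 0).card ≤ N →
      ∃ c' : ι → ℝ, (∀ i, 0 ≤ c' i) ∧ ∑ i, c' i • v i = ∑ i, c i • v i ∧
        LinearIndependent ℝ (fun i : {i // c' i ≠ 0} => v i) := by
  classical
  intro N
  induction N with
  | zero =>
    intro c hc hcard
    have hall : ∀ i, c i = 0 := by
      intro i
      by_contra hi
      have hmem : i ∈ Finset.univ.filter fun i => c i ≠ 0 := by simp [hi]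
      have := Finset.card_pos.2 ⟨i, hmem⟩
      omega
    refine ⟨c, hc, rfl, ?_⟩
    have : IsEmpty {i // c i ≠ 0} := ⟨fun ⟨i, hi⟩ => hi (hall i)⟩
    exact linearIndependent_empty_type
  | succ N ih =>
    intro c hc hcard
    by_cases hli : LinearIndependent ℝ (fun i : {i // c i ≠ 0} => v i)
    · exact ⟨c, hc, rfl, hli⟩
    obtain ⟨g, hg0, i₁, hi₁⟩ := Fintype.not_linearIndependent_iff.1 hli
    set d : ι → ℝ := fun i => if h : c i ≠ 0 then g ⟨i, h⟩ else 0 with hd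
    have hdsum : ∑ i, d i • v i = 0 := by
      have h1 : ∑ i ∈ Finset.univ.filter (fun i => c i ≠ 0), d i • v i
          = ∑ i : {i // c i ≠ 0}, d i.1 • v i.1 :=
        Finset.sum_subtype _ (by intro x; simp) _
      have h2 : ∑ i : ι, d i • v i
          = ∑ i ∈ Finset.univ.filter (fun i => c i ≠ 0), d i • v i := by
        refine (Finset.sum_subset (Finset.filter_subset _ _) ?_).symm
        intro i _ hi
        simp only [Finset.mem_filter, Finset.mem_univ, true_and, not_not] at hi
        simp [hd, hi]
      rw [h2, h1, ← hg0]
      exact Finset.sum_congr rfl fun i _ => by simp [hd, i.2]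
    have hdsupp : ∀ i, c i = 0 → d i = 0 := by
      intro i hi; simp [hd, hi]
    have hdne : d i₁.1 ≠ 0 := by
      simpa [hd, i₁.2] using hi₁
    obtain ⟨e, hesum, hesupp, i₂, hi₂⟩ :
        ∃ e : ι → ℝ, ∑ i, e i • v i = 0 ∧ (∀ i, c i = 0 → e i = 0) ∧ ∃ i, 0 < e i := by
      rcases hdne.lt_or_gt with hlt | hgt
      · refine ⟨fun i => -d i, ?_, fun i hi => by simp [hdsupp i hi], i₁.1, by simpa using neg_pos.2 hlt⟩
        simp [neg_smul, Finset.sum_neg_distrib, hdsum]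
      · exact ⟨d, hdsum, hdsupp, i₁.1, hgt⟩
    set T := Finset.univ.filter fun i => 0 < e i with hT
    have hTne : T.Nonempty := ⟨i₂, by simp [hT, hi₂]⟩
    obtain ⟨i₀, hi₀T, hmin⟩ := Finset.exists_min_image T (fun i => c i / e i) hTne
    have he₀ : 0 < e i₀ := by
      simpa [hT] using hi₀T
    set r := c i₀ / e i₀ with hr
    have hr0 : 0 ≤ r := div_nonneg (hc _) he₀.le
    set c'' : ι → ℝ := fun i => c i - r * e i with hc''def
    have hc''0 : ∀ i, 0 ≤ c'' i := by
      intro i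
      by_cases hie : 0 < e i
      · have hm := hmin i (by simp [hT, hie])
        have : r * e i ≤ c i := by
          rw [le_div_iff₀ hie] at hm
          linarith
        simp only [hc''def]; linarith
      · have hle : e i ≤ 0 := not_lt.1 hie
        have : r * e i ≤ 0 := mul_nonpos_of_nonneg_of_nonpos hr0 hle
        have := hc i
        simp only [hc''def]; linarith
    have hsum'' : ∑ i, c'' i • v i = ∑ i, c i • v i := by
      simp only [hc''def, sub_smul, mul_smul]
      rw [Finset.sum_sub_distrib, ← Finset.smul_sum, hesum, smul_zero, sub_zero]
    have hc''i₀ : c'' i₀ = 0 := by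
      simp only [hc''def, hr]
      field_simp
      ring
    have hci₀ : c i₀ ≠ 0 := by
      intro hcon
      exact absurd (hesupp i₀ hcon) (by positivity)
    have hsub : (Finset.univ.filter fun i => c'' i ≠ 0) ⊆
        (Finset.univ.filter fun i => c i ≠ 0).erase i₀ := by
      intro i hi
      simp only [Finset.mem_filter, Finset.mem_univ, true_and] at hi
      rw [Finset.mem_erase]
      refine ⟨fun hcon => hi (hcon ▸ hc''i₀), ?_⟩
      simp only [Finset.mem_filter, Finset.mem_univ, true_and]
      intro hcon
      exact hi (by simp [hc''def, hcon, hesupp i hcon])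
    have hcard' : (Finset.univ.filter fun i => c'' i ≠ 0).card ≤ N := by
      have h1 := Finset.card_le_card hsub
      have h2 : i₀ ∈ Finset.univ.filter fun i => c i ≠ 0 := by simp [hci₀]
      have h3 := Finset.card_erase_of_mem h2
      omega
    obtain ⟨c', h1, h2, h3⟩ := ih c'' hc''0 hcard'
    exact ⟨c', h1, h2.trans hsum'', h3⟩

lemma coneSet_isClosed_of_li {ι E : Type*} [Fintype ι] [NormedAddCommGroup E]
    [NormedSpace ℝ E] [FiniteDimensional ℝ E] (w : ι → E)
    (hw : LinearIndependent ℝ w) : IsClosed (coneSet w) := by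
  classical
  let f : (ι → ℝ) →ₗ[ℝ] E :=
    { toFun := fun c => ∑ i, c i • w i
      map_add' := by intro a b; simp [add_smul, Finset.sum_add_distrib]
      map_smul' := by intro m a; simp [mul_smul, Finset.smul_sum] }
  have hker : LinearMap.ker f = ⊥ := by
    rw [LinearMap.ker_eq_bot]
    intro a b hab
    have hz : ∑ i, (a - b) i • w i = 0 := by
      simp only [Pi.sub_apply, sub_smul, Finset.sum_sub_distrib]
      have : f a = f b := hab
      simpa [f, sub_eq_zero] using this
    have := Fintype.linearIndependent_iff.1 hw (a - b) hz
    funext i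
    have hi := this i
    simpa [sub_eq_zero] using hi
  have hemb := LinearMap.isClosedEmbedding_of_injective (f := f) hker
  have himg : coneSet w = f '' {c : ι → ℝ | ∀ i, 0 ≤ c i} := by
    ext x
    constructor
    · rintro ⟨c, hc, hs⟩; exact ⟨c, hc, hs⟩
    · rintro ⟨c, hc, hs⟩; exact ⟨c, hc, hs⟩
  rw [himg]
  refine hemb.isClosedMap _ ?_
  have : {c : ι → ℝ | ∀ i, 0 ≤ c i} = ⋂ i, {c : ι → ℝ | 0 ≤ c i} := by
    ext c; simp
  rw [this]
  exact isClosed_iInter fun i => isClosed_le continuous_const (continuous_apply i)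

lemma coneSet_isClosed {ι E : Type*} [Fintype ι] [NormedAddCommGroup E]
    [NormedSpace ℝ E] [FiniteDimensional ℝ E] (v : ι → E) : IsClosed (coneSet v) := by
  classical
  have main : coneSet v =
      ⋃ s ∈ {s : Finset ι | LinearIndependent ℝ (fun i : s => v i)},
        coneSet (fun i : s => v i) := by
    ext x
    constructor
    · rintro ⟨c, hc, hs⟩
      obtain ⟨c', hc'0, hc'sum, hc'li⟩ :=
        carath_aux v (Finset.univ.filter fun i => c i ≠ 0).card c hc le_rfl
      set s : Finset ι := Finset.univ.filter fun i => c' i ≠ 0 with hsdef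
      have hli : LinearIndependent ℝ (fun i : s => v i) := by
        exact hc'li.comp
          (Equiv.subtypeEquivRight (q := fun i => c' i ≠ 0) (by intro i; simp [hsdef]))
          (Equiv.injective _)
      refine Set.mem_biUnion hli ?_
      refine ⟨fun i => c' i.1, fun i => hc'0 i.1, ?_⟩
      rw [Finset.sum_coe_sort s (fun i => c' i • v i)]
      rw [Finset.sum_subset (Finset.filter_subset _ _)]
      · rw [hc'sum]; exact hs
      · intro i _ hi
        simp only [hsdef, Finset.mem_filter, Finset.mem_univ, true_and, not_not] at hi
        simp [hi]
    · intro hx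
      obtain ⟨s, hsli, hxs⟩ := Set.mem_iUnion₂.1 hx
      obtain ⟨cs, hcs0, hcssum⟩ := hxs
      refine ⟨fun i => if h : i ∈ s then cs ⟨i, h⟩ else 0, ?_, ?_⟩
      · intro i
        by_cases h : i ∈ s
        · simp [h, hcs0 ⟨i, h⟩]
        · simp [h]
      · rw [← Finset.sum_subset (Finset.subset_univ s)]
        · rw [← hcssum, ← Finset.sum_attach s
            (fun i => (if h : i ∈ s then cs ⟨i, h⟩ else 0) • v i)]
          exact Finset.sum_congr rfl fun i _ => by simp [i.2]
        · intro i _ hi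
          simp [hi]
  rw [main]
  exact Set.Finite.isClosed_biUnion (Set.toFinite _)
    (fun s hs => coneSet_isClosed_of_li _ hs)

/-- The convex cone of nonnegative combinations. -/
def coneCone {ι E : Type*} [Fintype ι] [AddCommGroup E] [Module ℝ E] (v : ι → E) :
    ConvexCone ℝ E where
  carrier := coneSet v
  smul_mem' := by
    rintro t ht x ⟨c, hc, hs⟩
    exact ⟨fun i => t * c i, fun i => mul_nonneg ht.le (hc i), by
      simp only [mul_smul, ← Finset.smul_sum, hs]⟩
  add_mem' := by
    rintro x ⟨cx, hcx, hsx⟩ y ⟨cy, hcy, hsy⟩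
    exact ⟨fun i => cx i + cy i, fun i => add_nonneg (hcx i) (hcy i), by
      simp only [add_smul, Finset.sum_add_distrib, hsx, hsy]⟩

lemma zero_mem_coneSet {ι E : Type*} [Fintype ι] [AddCommGroup E] [Module ℝ E]
    (v : ι → E) : (0 : E) ∈ coneSet v :=
  ⟨0, fun _ => le_rfl, by simp⟩

lemma self_mem_coneSet {ι E : Type*} [Fintype ι] [DecidableEq ι] [AddCommGroup E] [Module ℝ E]
    (v : ι → E) (j : ι) : v j ∈ coneSet v := by
  refine ⟨fun i => if i = j then 1 else 0, fun i => by positivity, ?_⟩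
  simp [ite_smul]

lemma cone_sep_aux {E : Type*} [NormedAddCommGroup E] [InnerProductSpace ℝ E] [CompleteSpace E]
    (K : ConvexCone ℝ E) (hK0 : (0 : E) ∈ K) (hc : IsClosed (K : Set E)) {b : E} (hb : b ∉ K) :
    ∃ y, (∀ x ∈ K, 0 ≤ ⟪x, y⟫) ∧ ⟪y, b⟫ < 0 := by
  let C : ProperCone ℝ E :=
    { toSubmodule :=
        { carrier := K
          add_mem' := fun ha hb => K.add_mem ha hb
          zero_mem' := hK0
          smul_mem' := by
            intro t x hx
            rcases eq_or_lt_of_le t.2 with h0 | hpos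
            · have : t = 0 := NNReal.eq h0.symm
              simpa [this] using hK0
            · exact K.smul_mem hpos hx }
      isClosed' := hc }
  obtain ⟨y, hy1, hy2⟩ := ProperCone.hyperplane_separation' C (x₀ := b) hb
  exact ⟨y, hy1, by rwa [real_inner_comm]⟩

theorem farkas_affine_complete (k n : ℕ) (A : Matrix (Fin k) (Fin n) ℝ)
    (b : Fin k → ℝ) (c : Fin n → ℝ) (β : ℝ)
    (hfeas : ∃ x : Fin n → ℝ, ∀ i, A.mulVec x i ≥ b i)
    (h : ∀ x : Fin n → ℝ, (∀ i, A.mulVec x i ≥ b i) → dotProduct c x ≥ β) :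
    ∃ lam : Fin k → ℝ, (∀ i, 0 ≤ lam i) ∧ A.transpose.mulVec lam = c ∧ dotProduct lam b ≥ β := by
  classical
  set g : Fin (k + 1) → EuclideanSpace ℝ (Fin (n + 1)) :=
    Fin.snoc (fun i => WithLp.toLp 2 (Fin.snoc (A i) (b i) : Fin (n + 1) → ℝ))
      (WithLp.toLp 2 (Fin.snoc 0 (-1) : Fin (n + 1) → ℝ)) with hgdef
  set p : EuclideanSpace ℝ (Fin (n + 1)) := WithLp.toLp 2 (Fin.snoc c β : Fin (n + 1) → ℝ) with hpdef
  have hp : p ∈ coneSet g := by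
    by_contra hnp
    obtain ⟨y, hy1, hy2⟩ :=
      cone_sep_aux (coneCone g)
        (zero_mem_coneSet g) (coneSet_isClosed g) (b := p) hnp
    set x0 : Fin n → ℝ := fun j => y j.castSucc with hx0
    set t : ℝ := y (Fin.last n) with ht
    have hinner : ∀ z : EuclideanSpace ℝ (Fin (n + 1)), (inner ℝ z y : ℝ) = ∑ j, (z : Fin (n + 1) → ℝ) j * y j := by
      intro z
      simp [PiLp.inner_apply, RCLike.inner_apply, conj_trivial, mul_comm]
    have hA : ∀ i : Fin k, 0 ≤ ∑ j, A i j * x0 j + b i * t := by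
      intro i
      have := hy1 (g i.castSucc) (self_mem_coneSet g i.castSucc)
      rw [hinner] at this
      have hgci : (g i.castSucc : Fin (n + 1) → ℝ) = Fin.snoc (A i) (b i) := by
        simp [hgdef, Fin.snoc_castSucc]
      rw [hgci] at this
      rw [Fin.sum_univ_castSucc] at this
      simpa [Fin.snoc_castSucc, Fin.snoc_last, hx0, ht] using this
    have htle : t ≤ 0 := by
      have := hy1 (g (Fin.last k)) (self_mem_coneSet g (Fin.last k))
      rw [hinner] at this
      have hgl : (g (Fin.last k) : Fin (n + 1) → ℝ)
          = (Fin.snoc (0 : Fin n → ℝ) (-1) : Fin (n + 1) → ℝ) := by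
        simp [hgdef, Fin.snoc_last]
      rw [hgl, Fin.sum_univ_castSucc] at this
      simp only [Fin.snoc_castSucc, Fin.snoc_last, Pi.zero_apply, zero_mul,
        Finset.sum_const_zero, zero_add, neg_mul, one_mul, ← ht] at this
      linarith
    have hy2' : ∑ j, x0 j * c j + t * β < 0 := by
      rw [real_inner_comm] at hy2
      rw [hinner] at hy2
      have hpc : (p : Fin (n + 1) → ℝ) = Fin.snoc c β := rfl
      rw [hpc, Fin.sum_univ_castSucc] at hy2
      have : ∑ j : Fin n, (Fin.snoc c β : Fin (n+1) → ℝ) j.castSucc * y j.castSucc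
          + (Fin.snoc c β : Fin (n+1) → ℝ) (Fin.last n) * y (Fin.last n) < 0 := hy2
      simp only [Fin.snoc_castSucc, Fin.snoc_last] at this
      have heq : ∑ j : Fin n, c j * y j.castSucc = ∑ j, x0 j * c j :=
        Finset.sum_congr rfl fun j _ => by rw [hx0]; ring
      rw [heq] at this
      linarith [this]
    rcases htle.lt_or_eq with htlt | hteq
    · -- t < 0
      set x : Fin n → ℝ := fun j => x0 j / (-t) with hx
      have hxfeas : ∀ i, A.mulVec x i ≥ b i := by
        intro i
        have hnt : 0 < -t := by linarith
        have : A.mulVec x i = (∑ j, A i j * x0 j) / (-t) := by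
          simp only [Matrix.mulVec, dotProduct, hx]
          rw [Finset.sum_div]
          exact Finset.sum_congr rfl fun j _ => by ring
        rw [this, ge_iff_le, le_div_iff₀ hnt]
        have := hA i
        nlinarith
      have hcx := h x hxfeas
      have hdot : dotProduct c x = (∑ j, x0 j * c j) / (-t) := by
        simp only [dotProduct, hx]
        rw [Finset.sum_div]
        exact Finset.sum_congr rfl fun j _ => by ring
      rw [hdot] at hcx
      have hnt : 0 < -t := by linarith
      rw [ge_iff_le, le_div_iff₀ hnt] at hcx
      nlinarith
    · -- t = 0
      have hA0 : ∀ i : Fin k, 0 ≤ ∑ j, A i j * x0 j := by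
        intro i; have := hA i; rw [hteq] at this; simpa using this
      set d : ℝ := ∑ j, x0 j * c j with hdd
      have hdneg : d < 0 := by
        have := hy2'; rw [hteq] at this; simpa [hdd] using this
      obtain ⟨x₁, hx₁⟩ := hfeas
      have hcx₁ := h x₁ hx₁
      set s : ℝ := (dotProduct c x₁ - β) / (-d) + 1 with hs
      have hs0 : 0 ≤ s := by
        have h1 : 0 ≤ (dotProduct c x₁ - β) / (-d) :=
          div_nonneg (by linarith) (by linarith)
        rw [hs]; linarith
      set x : Fin n → ℝ := fun j => x₁ j + s * x0 j with hx
      have hxfeas : ∀ i, A.mulVec x i ≥ b i := by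
        intro i
        have : A.mulVec x i = A.mulVec x₁ i + s * ∑ j, A i j * x0 j := by
          simp only [Matrix.mulVec, dotProduct, hx, Finset.mul_sum]
          rw [← Finset.sum_add_distrib]
          exact Finset.sum_congr rfl fun j _ => by ring
        rw [this]
        have := hx₁ i
        have := mul_nonneg hs0 (hA0 i)
        linarith
      have hcx := h x hxfeas
      have hdot : dotProduct c x = dotProduct c x₁ + s * d := by
        simp only [dotProduct, hx, hdd, Finset.mul_sum]
        rw [← Finset.sum_add_distrib]
        exact Finset.sum_congr rfl fun j _ => by ring
      rw [hdot] at hcx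
      have hsd : s * d = -(dotProduct c x₁ - β) + d := by
        have hd0 : d ≠ 0 := by linarith
        rw [hs, add_mul, one_mul, div_neg, neg_mul, div_mul_cancel₀ _ hd0]
      rw [hsd] at hcx
      linarith
  obtain ⟨cc, hcc0, hccsum⟩ := hp
  set lam : Fin k → ℝ := fun i => cc i.castSucc with hlam
  set μ : ℝ := cc (Fin.last k) with hμ
  have hcoord : ∀ j : Fin (n + 1),
      ∑ i, cc i * (g i : Fin (n + 1) → ℝ) j = (p : Fin (n + 1) → ℝ) j := by
    intro j
    have := congrArg (EuclideanSpace.proj j) hccsum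
    rw [map_sum] at this
    simpa using this
  refine ⟨lam, fun i => hcc0 i.castSucc, ?_, ?_⟩
  · funext j
    have := hcoord j.castSucc
    rw [Fin.sum_univ_castSucc] at this
    have hgc : ∀ i : Fin k, (g i.castSucc : Fin (n + 1) → ℝ) j.castSucc = A i j := by
      intro i; simp [hgdef, Fin.snoc_castSucc]
    have hgl : (g (Fin.last k) : Fin (n + 1) → ℝ) j.castSucc = 0 := by
      simp [hgdef, Fin.snoc_last, Fin.snoc_castSucc]
    have hpc : (p : Fin (n + 1) → ℝ) j.castSucc = c j := by
      simp [hpdef, Fin.snoc_castSucc]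
    rw [hgl, hpc] at this
    simp only [mul_zero, add_zero] at this
    have heq : ∑ i : Fin k, cc i.castSucc * (g i.castSucc : Fin (n + 1) → ℝ) j.castSucc
        = ∑ i : Fin k, A.transpose j i * lam i :=
      Finset.sum_congr rfl fun i _ => by rw [hgc i, hlam, Matrix.transpose_apply]; ring
    rw [heq] at this
    simpa [Matrix.mulVec, dotProduct] using this
  · have := hcoord (Fin.last n)
    rw [Fin.sum_univ_castSucc] at this
    have hgc : ∀ i : Fin k, (g i.castSucc : Fin (n + 1) → ℝ) (Fin.last n) = b i := by
      intro i; simp [hgdef, Fin.snoc_castSucc, Fin.snoc_last]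
    have hgl : (g (Fin.last k) : Fin (n + 1) → ℝ) (Fin.last n) = -1 := by
      simp [hgdef, Fin.snoc_last]
    have hpc : (p : Fin (n + 1) → ℝ) (Fin.last n) = β := by
      simp [hpdef, Fin.snoc_last]
    rw [hgl, hpc] at this
    have heq : ∑ i : Fin k, cc i.castSucc * (g i.castSucc : Fin (n + 1) → ℝ) (Fin.last n)
        = dotProduct lam b :=
      Finset.sum_congr rfl fun i _ => by rw [hgc i, hlam]
    rw [heq] at this
    have hμ0 : 0 ≤ μ := hcc0 (Fin.last k)
    simp only [mul_neg_one, ← hμ] at this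
    linarith
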